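/- arXiv:1405.7022 — 2 statements merged into one kernel-verified Lean document; each statement's English description precedes it below -/
import Mathlib

section
/- For every ε > 0 and every κ ≥ 1 there exists a constant K > 0 such that for all reals A, B, C ≥ 1 and all reals D ≥ 0 with D ≤ κ·min(B², A·C), one has U(A,B,C,D) ≤ K · (A·(1 + √D) + B·(1 + D)·(A·C)^{ε}). -/
open Finset in
lemma divisor_bound_aux (ε : ℝ) (hε : 0 < ε) :
    ∃ K : ℝ, 1 ≤ K ∧ ∀ n : ℕ, 0 < n → (n.divisors.card : ℝ) ≤ K * (n : ℝ) ^ ε := by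
  set M : ℝ := max 1 (1 / ((2:ℝ) ^ ε - 1)) with hM
  have h2e : (1:ℝ) < (2:ℝ) ^ ε := by
    have := Real.one_lt_rpow_iff_of_pos (x := 2) (by norm_num) (y := ε)
    rw [this]; left; exact ⟨by norm_num, hε⟩
  have hM1 : (1:ℝ) ≤ M := le_max_left _ _
  have hM2 : 1 ≤ M * ((2:ℝ) ^ ε - 1) := by
    have h := le_max_right 1 (1 / ((2:ℝ) ^ ε - 1))
    calc (1:ℝ) = (1 / ((2:ℝ) ^ ε - 1)) * ((2:ℝ)^ε - 1) := by
          rw [one_div, inv_mul_cancel₀ (by linarith)]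
      _ ≤ M * ((2:ℝ)^ε - 1) := by
          apply mul_le_mul_of_nonneg_right h (by linarith)
  -- uniform bound: k+1 ≤ M * 2^(ε k)
  have key : ∀ k : ℕ, ((k:ℝ) + 1) ≤ M * ((2:ℝ) ^ ε) ^ k := by
    intro k
    have hb : (1:ℝ) + (k:ℝ) * ((2:ℝ)^ε - 1) ≤ ((2:ℝ)^ε) ^ k := by
      have := one_add_mul_le_pow (a := (2:ℝ)^ε - 1) (by linarith) k
      simpa using this
    have : (k:ℝ) + 1 ≤ M * (1 + (k:ℝ) * ((2:ℝ)^ε - 1)) := by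
      have hk : (0:ℝ) ≤ k := Nat.cast_nonneg k
      nlinarith
    calc ((k:ℝ)+1) ≤ M * (1 + (k:ℝ) * ((2:ℝ)^ε - 1)) := this
      _ ≤ M * ((2:ℝ)^ε) ^ k := by
          apply mul_le_mul_of_nonneg_left hb (by linarith)
  set N : ℕ := ⌈(2:ℝ) ^ (1/ε)⌉₊ with hN
  refine ⟨M ^ N, one_le_pow₀ hM1, ?_⟩
  intro n hn
  have hn0 : n ≠ 0 := hn.ne'
  -- per-prime bound
  have prime_bd : ∀ p ∈ n.primeFactors,
      ((n.factorization p : ℝ) + 1) ≤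
        (if (p:ℝ) < (2:ℝ)^(1/ε) then M else 1) * (p:ℝ) ^ (ε * (n.factorization p : ℕ)) := by
    intro p hp
    have hpp : p.Prime := Nat.prime_of_mem_primeFactors hp
    have hp2 : (2:ℝ) ≤ (p:ℝ) := by exact_mod_cast hpp.two_le
    set k : ℕ := n.factorization p
    have hrw : (p:ℝ) ^ (ε * (k:ℕ)) = ((p:ℝ) ^ ε) ^ k := by
      rw [Real.rpow_mul (by linarith : (0:ℝ) ≤ (p:ℝ)), Real.rpow_natCast]
    rw [hrw]
    split_ifs with h
    · calc ((k:ℝ)+1) ≤ M * ((2:ℝ)^ε) ^ k := key k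
        _ ≤ M * ((p:ℝ)^ε) ^ k := by
            apply mul_le_mul_of_nonneg_left _ (by linarith)
            apply pow_le_pow_left₀ (by positivity)
            exact Real.rpow_le_rpow (by norm_num) hp2 hε.le
    · push_neg at h
      have h2p : (2:ℝ) ≤ (p:ℝ) ^ ε := by
        have := Real.rpow_le_rpow (by positivity) h hε.le
        rwa [← Real.rpow_mul (by norm_num), one_div_mul_cancel hε.ne', Real.rpow_one] at this
      have : ((k:ℝ)+1) ≤ (2:ℝ) ^ k := by
        exact_mod_cast Nat.lt_two_pow_self (n := k)
      calc ((k:ℝ)+1) ≤ (2:ℝ) ^ k := this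
        _ ≤ ((p:ℝ)^ε) ^ k := pow_le_pow_left₀ (by norm_num) h2p k
        _ = 1 * ((p:ℝ)^ε) ^ k := (one_mul _).symm
  -- n^ε as product
  have hnprod : ((n:ℝ)) ^ ε = ∏ p ∈ n.primeFactors, (p:ℝ) ^ (ε * (n.factorization p : ℕ)) := by
    have h1 : (n:ℝ) = ∏ p ∈ n.primeFactors, (p:ℝ) ^ (n.factorization p : ℕ) := by
      conv_lhs => rw [← Nat.factorization_prod_pow_eq_self hn0]
      rw [Nat.prod_factorization_eq_prod_primeFactors]
      push_cast
      rfl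
    rw [h1, ← Real.finset_prod_rpow _ _ (fun p _ => by positivity)]
    apply Finset.prod_congr rfl
    intro p hp
    have hp0 : (0:ℝ) ≤ (p:ℝ) := Nat.cast_nonneg p
    rw [← Real.rpow_natCast (p:ℝ) (n.factorization p), ← Real.rpow_mul hp0, mul_comm]
  have hcard : (n.divisors.card : ℝ) = ∏ p ∈ n.primeFactors, ((n.factorization p : ℝ) + 1) := by
    rw [Nat.card_divisors hn0]
    push_cast
    rfl
  rw [hcard, hnprod]
  calc ∏ p ∈ n.primeFactors, ((n.factorization p : ℝ) + 1)
      ≤ ∏ p ∈ n.primeFactors,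
          ((if (p:ℝ) < (2:ℝ)^(1/ε) then M else 1) * (p:ℝ) ^ (ε * (n.factorization p : ℕ))) := by
        apply Finset.prod_le_prod (fun p _ => by positivity) prime_bd
    _ = (∏ p ∈ n.primeFactors, (if (p:ℝ) < (2:ℝ)^(1/ε) then M else 1)) *
          ∏ p ∈ n.primeFactors, (p:ℝ) ^ (ε * (n.factorization p : ℕ)) := by
        rw [Finset.prod_mul_distrib]
    _ ≤ M ^ N * ∏ p ∈ n.primeFactors, (p:ℝ) ^ (ε * (n.factorization p : ℕ)) := by
        apply mul_le_mul_of_nonneg_right _ (Finset.prod_nonneg (fun p _ => by positivity))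
        set s := n.primeFactors.filter (fun p : ℕ => ((p:ℝ) < (2:ℝ)^(1/ε))) with hs
        have heq : ∏ p ∈ n.primeFactors, (if (p:ℝ) < (2:ℝ)^(1/ε) then M else 1) = M ^ s.card := by
          rw [Finset.prod_ite, Finset.prod_const, Finset.prod_const, one_pow, mul_one]
        rw [heq]
        apply pow_le_pow_right₀ hM1
        have hsub : s ⊆ Finset.range N := by
          intro p hp
          rw [Finset.mem_range]
          have : (p:ℝ) < (2:ℝ)^(1/ε) := (Finset.mem_filter.mp hp).2
          have h2 : ((2:ℝ)^(1/ε)) ≤ (N:ℝ) := Nat.le_ceil _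
          exact_mod_cast this.trans_le h2
        simpa using Finset.card_le_card hsub

lemma card_Icc_le_real (m : ℤ) (x : ℝ) (hm : (m:ℝ) ≤ x) (h0 : 0 ≤ x) :
    ((Finset.Icc (-m) m).card : ℝ) ≤ 2 * x + 1 := by
  rcases le_or_gt 0 m with h | h
  · rw [Int.card_Icc]
    have h2 : (m + 1 - -m).toNat = 2 * m.toNat + 1 := by omega
    rw [h2]
    have h3 : (m.toNat : ℝ) = (m : ℝ) := by exact_mod_cast Int.toNat_of_nonneg h
    push_cast [h3]
    linarith
  · rw [Finset.Icc_eq_empty (by omega)]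
    simp; linarith

/-- `U(A,B,C,D)` counts triples `(a,b,c) ∈ ℤ³` with `1 ≤ |a| ≤ A`, `|b| ≤ B`,
`|c| ≤ C`, `|b² − ac| ≤ D`. -/
noncomputable def U (A B C D : ℝ) : ℕ :=
  Set.ncard {t : ℤ × ℤ × ℤ |
    1 ≤ |t.1| ∧ (|t.1| : ℝ) ≤ A ∧ (|t.2.1| : ℝ) ≤ B ∧ (|t.2.2| : ℝ) ≤ C ∧
      (|t.2.1 ^ 2 - t.1 * t.2.2| : ℝ) ≤ D}

set_option maxHeartbeats 1600000 in
/-- For every `ε > 0` and `κ ≥ 1` there is `K > 0` such that for all `A, B, C ≥ 1` and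
`0 ≤ D ≤ κ min(B², AC)`:
`U(A,B,C,D) ≤ K (A(1 + √D) + B(1 + D)(AC)^ε)`. -/
theorem quadratic_form_count_bound :
    ∀ ε : ℝ, 0 < ε → ∀ κ : ℝ, 1 ≤ κ → ∃ K : ℝ, 0 < K ∧
      ∀ A B C D : ℝ, 1 ≤ A → 1 ≤ B → 1 ≤ C → 0 ≤ D → D ≤ κ * min (B ^ 2) (A * C) →
        (U A B C D : ℝ) ≤
          K * (A * (1 + Real.sqrt D) + B * (1 + D) * (A * C) ^ ε) := by
  intro ε hε κ hκ
  obtain ⟨Kd, hKd1, hKd⟩ := divisor_bound_aux ε hε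
  refine ⟨18 * Kd, by linarith, ?_⟩
  intro A B C D hA hB hC hD _
  set s := Real.sqrt D with hs
  have hs0 : 0 ≤ s := Real.sqrt_nonneg D
  have hP1 : (1:ℝ) ≤ (A * C) ^ ε := Real.one_le_rpow (by nlinarith) hε.le
  have hP0 : (0:ℝ) ≤ (A * C) ^ ε := by linarith
  classical
  set T : Finset (ℤ × ℤ × ℤ) :=
    ((Finset.Icc (-⌊A⌋) ⌊A⌋) ×ˢ (Finset.Icc (-⌊B⌋) ⌊B⌋) ×ˢ (Finset.Icc (-⌊C⌋) ⌊C⌋)).filter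
      (fun t => 1 ≤ |t.1| ∧ |t.2.1 ^ 2 - t.1 * t.2.2| ≤ ⌊D⌋) with hT
  -- Step 1: U ≤ T.card
  have hsub : {t : ℤ × ℤ × ℤ |
      1 ≤ |t.1| ∧ (|t.1| : ℝ) ≤ A ∧ (|t.2.1| : ℝ) ≤ B ∧ (|t.2.2| : ℝ) ≤ C ∧
        (|t.2.1 ^ 2 - t.1 * t.2.2| : ℝ) ≤ D} ⊆ ↑T := by
    rintro ⟨a, b, c⟩ ⟨h1, h2, h3, h4, h5⟩
    simp only [hT, Finset.coe_filter, Set.mem_setOf_eq, Finset.mem_product,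
      Finset.mem_Icc] at *
    refine ⟨⟨?_, ?_, ?_⟩, h1, ?_⟩
    · exact abs_le.mp (Int.le_floor.mpr (by exact_mod_cast h2))
    · exact abs_le.mp (Int.le_floor.mpr (by exact_mod_cast h3))
    · exact abs_le.mp (Int.le_floor.mpr (by exact_mod_cast h4))
    · exact Int.le_floor.mpr (by exact_mod_cast h5)
  have hU : (U A B C D : ℝ) ≤ (T.card : ℝ) := by
    have h := Set.ncard_le_ncard hsub T.finite_toSet
    rw [Set.ncard_coe_finset] at h
    unfold U
    exact_mod_cast h
  -- Step 2: split on c = 0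
  have hsplit : (T.card : ℝ) =
      ((T.filter (fun t => t.2.2 = 0)).card : ℝ) +
      ((T.filter (fun t => ¬ t.2.2 = 0)).card : ℝ) := by
    rw [← Nat.cast_add]
    exact_mod_cast (Finset.card_filter_add_card_filter_not
      (s := T) (fun t => t.2.2 = 0)).symm
  -- Step 3: c = 0 part
  have hT0 : ((T.filter (fun t => t.2.2 = 0)).card : ℝ) ≤ (2*A+1) * (2*s+1) := by
    have hcard : (T.filter (fun t => t.2.2 = 0)).card ≤
        ((Finset.Icc (-⌊A⌋) ⌊A⌋) ×ˢ (Finset.Icc (-⌊s⌋) ⌊s⌋)).card := by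
      apply Finset.card_le_card_of_injOn (fun t => (t.1, t.2.1))
      · rintro ⟨a, b, c⟩ (ht : (a, b, c) ∈ T.filter (fun t : ℤ × ℤ × ℤ => t.2.2 = 0))
        simp only [hT, Finset.mem_filter, Finset.mem_product, Finset.mem_Icc] at ht
        obtain ⟨⟨⟨ha, hb, hc⟩, h1, h5⟩, hc0⟩ := ht
        subst hc0
        show (a, b) ∈ (Finset.Icc (-⌊A⌋) ⌊A⌋) ×ˢ (Finset.Icc (-⌊s⌋) ⌊s⌋)
        simp only [Finset.mem_product, Finset.mem_Icc]
        refine ⟨ha, ?_⟩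
        have hb2 : b ^ 2 ≤ ⌊D⌋ := by
          have := h5
          simpa using this
        have hbD : ((|b| : ℤ) : ℝ) ≤ s := by
          rw [hs, Real.le_sqrt (by positivity) hD]
          have h6 : ((b:ℝ)) ^ 2 ≤ D := by
            have h7 : ((b ^ 2 : ℤ) : ℝ) ≤ (⌊D⌋ : ℝ) := by exact_mod_cast hb2
            push_cast at h7
            linarith [Int.floor_le D]
          push_cast
          rw [sq_abs]
          exact h6
        exact abs_le.mp (Int.le_floor.mpr hbD)
      · rintro ⟨a, b, c⟩ ht ⟨a', b', c'⟩ ht' hEq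
        simp only [hT, Finset.coe_filter, Set.mem_setOf_eq] at ht ht'
        simp only [Prod.mk.injEq] at hEq
        have : c = c' := by rw [ht.2, ht'.2]
        simp [Prod.ext_iff, hEq.1, hEq.2, this]
    calc ((T.filter (fun t => t.2.2 = 0)).card : ℝ)
        ≤ (((Finset.Icc (-⌊A⌋) ⌊A⌋) ×ˢ (Finset.Icc (-⌊s⌋) ⌊s⌋)).card : ℝ) := by
          exact_mod_cast hcard
      _ = ((Finset.Icc (-⌊A⌋) ⌊A⌋).card : ℝ) * ((Finset.Icc (-⌊s⌋) ⌊s⌋).card : ℝ) := by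
          rw [Finset.card_product]; push_cast; ring
      _ ≤ (2*A+1) * (2*s+1) := by
          apply mul_le_mul (card_Icc_le_real _ _ (Int.floor_le A) (by linarith))
            (card_Icc_le_real _ _ (Int.floor_le s) hs0) (by positivity) (by linarith)
  -- Step 4: c ≠ 0 part
  set Q : Finset (ℤ × ℤ) := (Finset.Icc (-⌊B⌋) ⌊B⌋) ×ˢ (Finset.Icc (-⌊D⌋) ⌊D⌋) with hQ
  set T1 := T.filter (fun t => ¬ t.2.2 = 0) with hT1
  have hmap : ∀ t ∈ T1, (fun t : ℤ × ℤ × ℤ => (t.2.1, t.2.1^2 - t.1*t.2.2)) t ∈ Q := by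
    rintro ⟨a, b, c⟩ ht
    simp only [hT1, hT, Finset.mem_filter, Finset.mem_product, Finset.mem_Icc] at ht
    obtain ⟨⟨⟨ha, hb, hc⟩, h1, h5⟩, hc0⟩ := ht
    simp only [hQ, Finset.mem_product, Finset.mem_Icc]
    exact ⟨hb, abs_le.mp h5⟩
  have hfib := Finset.card_eq_sum_card_fiberwise hmap
  have hfiber_bd : ∀ q ∈ Q,
      ((T1.filter (fun t => (fun t : ℤ × ℤ × ℤ => (t.2.1, t.2.1^2 - t.1*t.2.2)) t = q)).card : ℝ)
        ≤ 2 * Kd * (A*C)^ε := by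
    intro q hq
    set F := T1.filter (fun t => (fun t : ℤ × ℤ × ℤ => (t.2.1, t.2.1^2 - t.1*t.2.2)) t = q) with hF
    set w : ℤ := q.1^2 - q.2 with hw
    have hmem : ∀ t ∈ F, t.2.1 = q.1 ∧ t.1 * t.2.2 = w ∧ t.1 ≠ 0 ∧ t.2.2 ≠ 0 ∧
        ((|t.1| : ℤ) : ℝ) ≤ A ∧ ((|t.2.2| : ℤ) : ℝ) ≤ C := by
      intro t ht
      rw [hF, Finset.mem_filter] at ht
      obtain ⟨ht1, heq⟩ := ht
      rw [hT1, Finset.mem_filter] at ht1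
      obtain ⟨htT, hc0⟩ := ht1
      rw [hT, Finset.mem_filter] at htT
      obtain ⟨hbox, h1, h5⟩ := htT
      simp only [Finset.mem_product, Finset.mem_Icc] at hbox
      obtain ⟨ha, hb, hc⟩ := hbox
      have he1 : t.2.1 = q.1 := by rw [← heq]
      have he2 : t.2.1 ^ 2 - t.1 * t.2.2 = q.2 := by rw [← heq]
      have ha0 : t.1 ≠ 0 := by
        intro h; rw [h] at h1; simp at h1
      refine ⟨he1, by rw [hw, ← he1, ← he2]; ring, ha0, hc0, ?_, ?_⟩
      · calc ((|t.1| : ℤ) : ℝ) ≤ ((⌊A⌋ : ℤ) : ℝ) := by exact_mod_cast abs_le.mpr ha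
          _ ≤ A := Int.floor_le A
      · calc ((|t.2.2| : ℤ) : ℝ) ≤ ((⌊C⌋ : ℤ) : ℝ) := by exact_mod_cast abs_le.mpr hc
          _ ≤ C := Int.floor_le C
    rcases Finset.eq_empty_or_nonempty F with hFe | ⟨t₀, ht₀⟩
    · rw [hFe]
      simp only [Finset.card_empty, Nat.cast_zero]
      positivity
    · obtain ⟨hb0, hw0, ha0, hc0, hAa, hCc⟩ := hmem t₀ ht₀
      have hwne : w ≠ 0 := by rw [← hw0]; exact mul_ne_zero ha0 hc0
      have hwn0 : 0 < w.natAbs := Int.natAbs_pos.mpr hwne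
      rw [Int.cast_abs] at hAa hCc
      have hwAC : ((w.natAbs : ℕ) : ℝ) ≤ A * C := by
        have h1 : ((w.natAbs : ℕ) : ℝ) = |(w : ℝ)| := by
          simp [Nat.cast_natAbs]
        have h2 : |(w : ℝ)| = |((t₀.1 : ℤ) : ℝ)| * |((t₀.2.2 : ℤ) : ℝ)| := by
          rw [← hw0]; push_cast; rw [abs_mul]
        rw [h1, h2]
        exact mul_le_mul hAa hCc (abs_nonneg _) (le_trans (abs_nonneg _) hAa)
      set Dw : Finset ℤ := w.natAbs.divisors.image (fun d : ℕ => (d : ℤ)) ∪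
        w.natAbs.divisors.image (fun d : ℕ => -(d : ℤ)) with hDw
      have hcard : F.card ≤ Dw.card := by
        apply Finset.card_le_card_of_injOn (fun t => t.1)
        · intro t ht
          obtain ⟨_, hw1, ha1, _, _, _⟩ := hmem t ht
          have hdvd : t.1.natAbs ∣ w.natAbs := Int.natAbs_dvd_natAbs.mpr ⟨t.2.2, hw1.symm⟩
          have hmem1 : t.1.natAbs ∈ w.natAbs.divisors := Nat.mem_divisors.mpr ⟨hdvd, hwn0.ne'⟩
          rcases Int.natAbs_eq t.1 with h | h
          · exact Finset.mem_union_left _ (Finset.mem_image.mpr ⟨_, hmem1, h.symm⟩)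
          · exact Finset.mem_union_right _ (Finset.mem_image.mpr ⟨_, hmem1, h.symm⟩)
        · intro t ht t' ht' hEq
          simp only [Finset.mem_coe] at ht ht'
          obtain ⟨hb1, hw1, ha1, _, _, _⟩ := hmem t ht
          obtain ⟨hb2, hw2, _, _, _, _⟩ := hmem t' ht'
          have hEq' : t.1 = t'.1 := hEq
          have hcc : t.2.2 = t'.2.2 := by
            apply mul_left_cancel₀ ha1
            rw [hw1, hEq', hw2]
          exact Prod.ext hEq' (Prod.ext (hb1.trans hb2.symm) hcc)
      have hDwcard : (Dw.card : ℝ) ≤ 2 * (w.natAbs.divisors.card : ℝ) := by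
        have h1 := Finset.card_union_le (w.natAbs.divisors.image (fun d : ℕ => (d : ℤ)))
          (w.natAbs.divisors.image (fun d : ℕ => -(d : ℤ)))
        have h2 := Finset.card_image_le (s := w.natAbs.divisors) (f := fun d : ℕ => (d : ℤ))
        have h3 := Finset.card_image_le (s := w.natAbs.divisors) (f := fun d : ℕ => -(d : ℤ))
        have h4 : Dw.card ≤ 2 * w.natAbs.divisors.card := le_trans h1 (by omega)
        exact_mod_cast h4
      calc (F.card : ℝ) ≤ (Dw.card : ℝ) := by exact_mod_cast hcard
        _ ≤ 2 * (w.natAbs.divisors.card : ℝ) := hDwcard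
        _ ≤ 2 * (Kd * ((w.natAbs : ℕ) : ℝ) ^ ε) := by linarith [hKd w.natAbs hwn0]
        _ ≤ 2 * Kd * (A*C)^ε := by
            rw [mul_assoc]
            have := Real.rpow_le_rpow (by positivity) hwAC hε.le
            nlinarith
  have hQcard : (Q.card : ℝ) ≤ (2*B+1) * (2*D+1) := by
    rw [hQ, Finset.card_product]
    push_cast
    exact mul_le_mul (card_Icc_le_real _ _ (Int.floor_le B) (by linarith))
      (card_Icc_le_real _ _ (Int.floor_le D) hD) (by positivity) (by linarith)
  have hT1bd : ((T1.card) : ℝ) ≤ (2*B+1) * (2*D+1) * (2 * Kd * (A*C)^ε) := by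
    rw [hfib]
    push_cast
    calc (∑ q ∈ Q, ((T1.filter
          (fun t => (fun t : ℤ × ℤ × ℤ => (t.2.1, t.2.1^2 - t.1*t.2.2)) t = q)).card : ℝ))
        ≤ ∑ _q ∈ Q, 2 * Kd * (A*C)^ε := Finset.sum_le_sum hfiber_bd
      _ = (Q.card : ℝ) * (2 * Kd * (A*C)^ε) := by rw [Finset.sum_const, nsmul_eq_mul]
      _ ≤ (2*B+1) * (2*D+1) * (2 * Kd * (A*C)^ε) := by
          apply mul_le_mul_of_nonneg_right hQcard (by positivity)
  -- Final arithmetic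
  have e1 : (2*A+1)*(2*s+1) ≤ 9*(A*(1+s)) := by nlinarith
  have e2 : (2*B+1)*(2*D+1) ≤ 9*(B*(1+D)) := by nlinarith
  have e3 : (2*B+1)*(2*D+1)*(2*Kd*(A*C)^ε) ≤ 9*(B*(1+D))*(2*Kd*(A*C)^ε) := by
    apply mul_le_mul_of_nonneg_right e2 (by positivity)
  have h9 : (0:ℝ) ≤ A*(1+s) := by positivity
  have h10 : (0:ℝ) ≤ B*(1+D)*(A*C)^ε := by positivity
  calc (U A B C D : ℝ) ≤ (T.card : ℝ) := hU
    _ = _ + _ := hsplit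
    _ ≤ (2*A+1)*(2*s+1) + (2*B+1)*(2*D+1)*(2*Kd*(A*C)^ε) := by
        exact add_le_add hT0 hT1bd
    _ ≤ 18 * Kd * (A * (1 + s) + B * (1 + D) * (A * C) ^ ε) := by nlinarith
end

section
/- Let q ≥ 2 and β be integers with gcd(2β, q) = 1. Then Σ_α e(β·\bar{α}²/q²) = 0, where the sum is over integers α with 1 ≤ α ≤ q² and gcd(α, q) = 1, and \bar{α} denotes any integer satisfying α·\bar{α} ≡ 1 (mod q²) (the summand does not depend on the choice of \bar{α}). -/
noncomputable def e (x : ℝ) : ℂ := Complex.exp (2 * Real.pi * Complex.I * x)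

lemma e_add (x y : ℝ) : e (x + y) = e x * e y := by
  simp only [e, ← Complex.exp_add]; congr 1; push_cast; ring

lemma e_int (n : ℤ) : e n = 1 := by
  have h := Complex.exp_int_mul_two_pi_mul_I n
  rw [e]
  rw [show (2 * (Real.pi:ℂ) * Complex.I * ((n:ℝ):ℂ)) = (n:ℂ) * (2 * Real.pi * Complex.I) by push_cast; ring]
  exact h

lemma e_add_int (x : ℝ) (n : ℤ) : e (x + n) = e x := by
  rw [e_add, e_int, mul_one]

lemma e_pow (x : ℝ) (n : ℕ) : e x ^ n = e (n * x) := by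
  rw [e, e, ← Complex.exp_nat_mul]; congr 1; push_cast; ring

lemma e_sq_congr (β q x y : ℤ) (hq : q ≠ 0) (h : (q:ℤ)^2 ∣ x - y) :
    e ((β:ℝ) * (x:ℝ)^2 / (q:ℝ)^2) = e ((β:ℝ) * (y:ℝ)^2 / (q:ℝ)^2) := by
  obtain ⟨k, hk⟩ := h
  have hx : x = y + q^2 * k := by linarith
  have hq' : (q:ℝ) ≠ 0 := Int.cast_ne_zero.mpr hq
  have harg : (β:ℝ) * (x:ℝ)^2 / (q:ℝ)^2
      = (β:ℝ) * (y:ℝ)^2 / (q:ℝ)^2 + ((2*β*y*k + β*q^2*k^2 : ℤ) : ℝ) := by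
    field_simp
    push_cast [hx]
    ring
  rw [harg, e_add_int]

lemma gcd_congr (a b q : ℤ) (h : q ∣ a - b) (hb : Int.gcd b q = 1) : Int.gcd a q = 1 := by
  rw [← Int.isCoprime_iff_gcd_eq_one] at hb ⊢
  obtain ⟨k, hk⟩ := h
  have : a = b + q * k := by linarith
  rw [this]
  exact hb.add_mul_left_left k

/-- For integers `q ≥ 2` and `β` with `gcd(2β, q) = 1`, and any choice `inv α` of an
integer inverse of `α` modulo `q²` (for each `α` coprime to `q`):
`Σ_{1 ≤ α ≤ q², gcd(α,q)=1} e(β (inv α)²/q²) = 0`. -/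
theorem salie_type_sum_vanishes (q β : ℤ) (hq : 2 ≤ q)
    (hcop : Int.gcd (2 * β) q = 1)
    (inv : ℤ → ℤ) (hinv : ∀ α : ℤ, Int.gcd α q = 1 → (q ^ 2 : ℤ) ∣ α * inv α - 1) :
    ∑ α ∈ Finset.filter (fun α : ℤ => Int.gcd α q = 1) (Finset.Icc 1 (q ^ 2)),
      e ((β : ℝ) * ((inv α : ℝ)) ^ 2 / (q : ℝ) ^ 2) = 0 := by
  have hq0 : q ≠ 0 := by omega
  have hqpos : (0:ℤ) < q := by omega
  have hQ : (0:ℤ) < q ^ 2 := by positivity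
  set S := Finset.filter (fun α : ℤ => Int.gcd α q = 1) (Finset.Icc 1 (q ^ 2)) with hS
  set m : ℤ → ℤ := fun x => (inv x - 1) % q ^ 2 + 1 with hm
  -- basic facts about m
  have hm_mem_Icc : ∀ x : ℤ, m x ∈ Finset.Icc 1 (q ^ 2) := by
    intro x
    have h1 := Int.emod_nonneg (inv x - 1) (ne_of_gt hQ)
    have h2 := Int.emod_lt_of_pos (inv x - 1) hQ
    simp only [hm, Finset.mem_Icc]
    omega
  have hm_cong : ∀ x : ℤ, (q:ℤ) ^ 2 ∣ inv x - m x := by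
    intro x
    refine ⟨(inv x - 1) / q ^ 2, ?_⟩
    have h := Int.mul_ediv_add_emod (inv x - 1) (q ^ 2)
    simp only [hm]
    linarith
  have hm_cong' : ∀ x : ℤ, q ∣ m x - inv x := by
    intro x
    have h2 : q ∣ inv x - m x := dvd_trans (dvd_pow_self q two_ne_zero) (hm_cong x)
    rw [show m x - inv x = -(inv x - m x) by ring]
    exact dvd_neg.mpr h2
  have hinv_cop : ∀ α : ℤ, Int.gcd α q = 1 → Int.gcd (inv α) q = 1 := by
    intro α hα
    obtain ⟨k, hk⟩ := hinv α hα
    rw [← Int.isCoprime_iff_gcd_eq_one]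
    exact ⟨α, -(q * k), by linear_combination hk⟩
  have hm_cop : ∀ α : ℤ, Int.gcd α q = 1 → Int.gcd (m α) q = 1 := by
    intro α hα
    exact gcd_congr (m α) (inv α) q (hm_cong' α) (hinv_cop α hα)
  -- unique representative lemma
  have hrep : ∀ x y : ℤ, (q:ℤ) ^ 2 ∣ y - x → 1 ≤ x → x ≤ q ^ 2 → (y - 1) % q ^ 2 + 1 = x := by
    intro x y h h1 h2
    have hme : (y - 1) % q ^ 2 = (x - 1) % q ^ 2 := by
      have : x ≡ y [ZMOD q ^ 2] := Int.modEq_iff_dvd.mpr h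
      have h' : y - 1 ≡ x - 1 [ZMOD q ^ 2] := Int.ModEq.sub_right 1 this.symm
      exact h'
    have hxe : (x - 1) % q ^ 2 = x - 1 := Int.emod_eq_of_lt (by omega) (by omega)
    omega
  -- involution property
  have key : ∀ α : ℤ, 1 ≤ α → α ≤ q ^ 2 → Int.gcd α q = 1 → m (m α) = α := by
    intro α h1 h2 hc
    have hcm : Int.gcd (m α) q = 1 := hm_cop α hc
    have d1 : (q:ℤ) ^ 2 ∣ α * inv α - 1 := hinv α hc
    have d2 : (q:ℤ) ^ 2 ∣ inv α - m α := hm_cong α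
    have d3 : (q:ℤ) ^ 2 ∣ α * m α - 1 := by
      rw [show α * m α - 1 = (α * inv α - 1) - α * (inv α - m α) by ring]
      exact dvd_sub d1 (d2.mul_left α)
    have d4 : (q:ℤ) ^ 2 ∣ m α * inv (m α) - 1 := hinv (m α) hcm
    have d5 : (q:ℤ) ^ 2 ∣ m α * (inv (m α) - α) := by
      rw [show m α * (inv (m α) - α) = (m α * inv (m α) - 1) - (α * m α - 1) by ring]
      exact dvd_sub d4 d3
    have hcop2 : IsCoprime ((q:ℤ) ^ 2) (m α) :=
      ((Int.isCoprime_iff_gcd_eq_one.mpr hcm).symm).pow_left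
    have d6 : (q:ℤ) ^ 2 ∣ inv (m α) - α := hcop2.dvd_of_dvd_mul_left d5
    exact hrep α (inv (m α)) d6 h1 h2
  -- Step 1: replace inv α by its representative m α and use the bijection
  have step1 : ∑ α ∈ S, e ((β : ℝ) * ((inv α : ℝ)) ^ 2 / (q : ℝ) ^ 2)
      = ∑ α ∈ S, e ((β : ℝ) * ((α : ℝ)) ^ 2 / (q : ℝ) ^ 2) := by
    have e1 : ∑ α ∈ S, e ((β : ℝ) * ((inv α : ℝ)) ^ 2 / (q : ℝ) ^ 2)
        = ∑ α ∈ S, e ((β : ℝ) * ((m α : ℝ)) ^ 2 / (q : ℝ) ^ 2) :=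
      Finset.sum_congr rfl (fun α _ => e_sq_congr β q (inv α) (m α) hq0 (hm_cong α))
    rw [e1]
    refine Finset.sum_bij' (i := fun α _ => m α) (j := fun α _ => m α) ?_ ?_ ?_ ?_ ?_
    · intro α hα
      simp only [hS, Finset.mem_filter, Finset.mem_Icc] at hα ⊢
      exact ⟨by simpa using (Finset.mem_Icc.mp (hm_mem_Icc α)), hm_cop α hα.2⟩
    · intro α hα
      simp only [hS, Finset.mem_filter, Finset.mem_Icc] at hα ⊢
      exact ⟨by simpa using (Finset.mem_Icc.mp (hm_mem_Icc α)), hm_cop α hα.2⟩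
    · intro α hα
      simp only [hS, Finset.mem_filter, Finset.mem_Icc] at hα
      exact key α hα.1.1 hα.1.2 hα.2
    · intro α hα
      simp only [hS, Finset.mem_filter, Finset.mem_Icc] at hα
      exact key α hα.1.1 hα.1.2 hα.2
    · intro α _
      rfl
  rw [step1]
  -- Step 2: decompose α = a + q t
  set A := Finset.filter (fun a : ℤ => Int.gcd a q = 1) (Finset.Icc 1 q) with hA
  set B := Finset.range q.toNat with hB
  have split_eq : ∀ α : ℤ, 1 ≤ α → (α - 1) % q + 1 + q * (((α - 1) / q).toNat : ℤ) = α := by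
    intro α h1
    have hn : 0 ≤ (α - 1) / q := Int.ediv_nonneg (by omega) (le_of_lt hqpos)
    rw [Int.toNat_of_nonneg hn]
    have h := Int.mul_ediv_add_emod (α - 1) q
    linarith
  have step2 : ∑ α ∈ S, e ((β : ℝ) * ((α : ℝ)) ^ 2 / (q : ℝ) ^ 2)
      = ∑ p ∈ A ×ˢ B, e ((β : ℝ) * (((p.1 + q * p.2 : ℤ) : ℝ)) ^ 2 / (q : ℝ) ^ 2) := by
    refine Finset.sum_bij'
      (i := fun α _ => ((α - 1) % q + 1, ((α - 1) / q).toNat))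
      (j := fun p _ => p.1 + q * (p.2 : ℤ)) ?_ ?_ ?_ ?_ ?_
    · -- i maps into A ×ˢ B
      intro α hα
      simp only [hS, Finset.mem_filter, Finset.mem_Icc] at hα
      obtain ⟨⟨h1, h2⟩, hc⟩ := hα
      have hr1 := Int.emod_nonneg (α - 1) hq0
      have hr2 := Int.emod_lt_of_pos (α - 1) hqpos
      have hdn : 0 ≤ (α - 1) / q := Int.ediv_nonneg (by omega) (le_of_lt hqpos)
      have hdl : (α - 1) / q < q := by
        rw [Int.ediv_lt_iff_lt_mul hqpos]
        nlinarith
      simp only [hA, hB, Finset.mem_product, Finset.mem_filter, Finset.mem_Icc,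
        Finset.mem_range]
      refine ⟨⟨⟨by omega, by omega⟩, ?_⟩, by omega⟩
      refine gcd_congr _ α q ?_ hc
      have h := split_eq α h1
      rw [Int.toNat_of_nonneg hdn] at h
      exact ⟨-((α - 1) / q), by linarith⟩
    · -- j maps into S
      intro p hp
      simp only [hA, hB, Finset.mem_product, Finset.mem_filter, Finset.mem_Icc,
        Finset.mem_range] at hp
      obtain ⟨⟨⟨h1, h2⟩, hc⟩, ht⟩ := hp
      have htz : (p.2 : ℤ) ≤ q - 1 := by omega
      have htz0 : (0:ℤ) ≤ (p.2 : ℤ) := Int.natCast_nonneg _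
      simp only [hS, Finset.mem_filter, Finset.mem_Icc]
      refine ⟨⟨by nlinarith, by nlinarith⟩, ?_⟩
      exact gcd_congr _ p.1 q ⟨(p.2 : ℤ), by ring⟩ hc
    · -- left inverse
      intro α hα
      simp only [hS, Finset.mem_filter, Finset.mem_Icc] at hα
      exact split_eq α hα.1.1
    · -- right inverse
      intro p hp
      simp only [hA, hB, Finset.mem_product, Finset.mem_filter, Finset.mem_Icc,
        Finset.mem_range] at hp
      obtain ⟨⟨⟨h1, h2⟩, hc⟩, ht⟩ := hp
      show ((p.1 + q * (p.2:ℤ) - 1) % q + 1, ((p.1 + q * (p.2:ℤ) - 1) / q).toNat) = p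
      have key1 : (p.1 + q * (p.2 : ℤ) - 1) % q = p.1 - 1 := by
        rw [show p.1 + q * (p.2 : ℤ) - 1 = p.1 - 1 + q * (p.2 : ℤ) by ring,
          Int.add_mul_emod_self_left]
        exact Int.emod_eq_of_lt (by omega) (by omega)
      have key2 : (p.1 + q * (p.2 : ℤ) - 1) / q = (p.2 : ℤ) := by
        rw [show p.1 + q * (p.2 : ℤ) - 1 = p.1 - 1 + q * (p.2 : ℤ) by ring,
          Int.add_mul_ediv_left _ _ hq0]
        rw [Int.ediv_eq_zero_of_lt (by omega) (by omega)]
        ring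
      rw [key1, key2]
      simp
    · -- summand equality
      intro α hα
      simp only [hS, Finset.mem_filter, Finset.mem_Icc] at hα
      rw [split_eq α hα.1.1]
  rw [step2, Finset.sum_product]
  refine Finset.sum_eq_zero (fun a ha => ?_)
  simp only [hA, Finset.mem_filter, Finset.mem_Icc] at ha
  obtain ⟨⟨ha1, ha2⟩, hac⟩ := ha
  have hq' : (q:ℝ) ≠ 0 := Int.cast_ne_zero.mpr hq0
  -- the summand factors as a constant times a geometric term
  have hterm : ∀ t : ℕ, e ((β : ℝ) * (((a + q * (t:ℤ) : ℤ) : ℝ)) ^ 2 / (q : ℝ) ^ 2)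
      = e ((β : ℝ) * ((a : ℝ)) ^ 2 / (q : ℝ) ^ 2) * (e ((2*β*a : ℤ) / (q:ℝ))) ^ t := by
    intro t
    rw [e_pow, ← e_add]
    have harg : (β : ℝ) * (((a + q * (t:ℤ) : ℤ) : ℝ)) ^ 2 / (q : ℝ) ^ 2
        = ((β : ℝ) * ((a : ℝ)) ^ 2 / (q : ℝ) ^ 2 + (t:ℝ) * (((2*β*a : ℤ):ℝ) / (q:ℝ)))
          + ((β * t^2 : ℤ) : ℝ) := by
      field_simp
      push_cast
      ring
    rw [harg, e_add_int]
  have hζ : e ((2*β*a : ℤ) / (q:ℝ)) ≠ 1 := by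
    intro h
    rw [e, Complex.exp_eq_one_iff] at h
    obtain ⟨n, hn⟩ := h
    have hπ : (2 * (Real.pi:ℂ) * Complex.I) ≠ 0 := by
      simp [Real.pi_ne_zero, Complex.I_ne_zero]
    rw [show (n:ℂ) * (2 * (Real.pi:ℂ) * Complex.I)
        = 2 * (Real.pi:ℂ) * Complex.I * (n:ℂ) by ring] at hn
    have hx : ((((2*β*a : ℤ):ℝ) / (q:ℝ) : ℝ) : ℂ) = (n:ℂ) := mul_left_cancel₀ hπ hn
    have hx' : ((2*β*a : ℤ):ℝ) / (q:ℝ) = (n:ℝ) := by exact_mod_cast hx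
    have hxx : ((2*β*a : ℤ):ℝ) = (n:ℝ) * (q:ℝ) := (div_eq_iff hq').mp hx'
    have hZ : (2*β*a : ℤ) = n * q := by exact_mod_cast hxx
    have hdvd : q ∣ 2*β*a := ⟨n, by linarith⟩
    have hc1 : IsCoprime (2*β) q := Int.isCoprime_iff_gcd_eq_one.mpr hcop
    have hc2 : IsCoprime a q := Int.isCoprime_iff_gcd_eq_one.mpr hac
    have hc3 : IsCoprime (2*β*a) q := hc1.mul_left hc2
    have hu : IsUnit q := hc3.isUnit_of_dvd' hdvd dvd_rfl
    rw [Int.isUnit_iff] at hu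
    omega
  calc ∑ t ∈ B, e ((β : ℝ) * (((a + q * (t:ℤ) : ℤ) : ℝ)) ^ 2 / (q : ℝ) ^ 2)
      = ∑ t ∈ B, e ((β : ℝ) * ((a : ℝ)) ^ 2 / (q : ℝ) ^ 2)
          * (e ((2*β*a : ℤ) / (q:ℝ))) ^ t :=
        Finset.sum_congr rfl (fun t _ => hterm t)
    _ = e ((β : ℝ) * ((a : ℝ)) ^ 2 / (q : ℝ) ^ 2)
          * ∑ t ∈ B, (e ((2*β*a : ℤ) / (q:ℝ))) ^ t := by
        rw [Finset.mul_sum]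
    _ = 0 := by
        rw [hB, geom_sum_eq hζ]
        have hpow : (e ((2*β*a : ℤ) / (q:ℝ))) ^ q.toNat = 1 := by
          rw [e_pow]
          have : ((q.toNat : ℕ) : ℝ) * (((2*β*a : ℤ):ℝ) / (q:ℝ)) = ((2*β*a : ℤ) : ℝ) := by
            rw [show ((q.toNat : ℕ) : ℝ) = (q:ℝ) by exact_mod_cast congrArg Int.cast (Int.toNat_of_nonneg (le_of_lt hqpos))]
            field_simp
          rw [this, e_int]
        rw [hpow]
        simp
end
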